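/- Let f_1,...,f_n : R^d → R be convex, differentiable and L-smooth, let f = (1/n)Σ f_i, and let x* be a minimizer of f. Then for all x, Σ_{i=1}^n ‖f_i'(x) − f_i'(x*)‖² ≤ 2 n L (f(x) − f(x*)). -/

import Mathlib

open Finset

noncomputable section

open RealInnerProductSpace

section aux

variable {E : Type*} [NormedAddCommGroup E] [InnerProductSpace ℝ E] [CompleteSpace E]
  {f : E → ℝ} {g : E → E} {L : ℝ}

/-- derivative of `t ↦ f (y + t • v)` -/
lemma auxDeriv (hg : ∀ y, HasGradientAt f (g y) y) (y v : E) (t : ℝ) :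
    HasDerivAt (fun t : ℝ => f (y + t • v)) ⟪g (y + t • v), v⟫ t := by
  have hc : HasDerivAt (fun t : ℝ => y + t • v) v t := by
    simpa using ((hasDerivAt_id t).smul_const v).const_add y
  have := ((hg (y + t • v)).hasFDerivAt).comp_hasDerivAt t hc
  exact this

/-- first-order condition for convexity -/
lemma auxA (hconv : ConvexOn ℝ Set.univ f)
    (hg : ∀ y, HasGradientAt f (g y) y) (x z : E) :
    f x + ⟪g x, z - x⟫ ≤ f z := by
  have hconv' : ConvexOn ℝ Set.univ (fun t : ℝ => f (x + t • (z - x))) := by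
    have := hconv.comp_affineMap (AffineMap.lineMap x z)
    have heq : (fun t : ℝ => f (x + t • (z - x))) = f ∘ (AffineMap.lineMap x z) := by
      funext t
      simp [AffineMap.lineMap_apply, Function.comp]
      congr 1
      abel
    rw [heq]
    exact this.subset (by simp) convex_univ
  have hd : HasDerivAt (fun t : ℝ => f (x + t • (z - x))) ⟪g (x + (0:ℝ) • (z - x)), z - x⟫ 0 :=
    auxDeriv hg x (z - x) 0
  have hslope := hconv'.le_slope_of_hasDerivAt (Set.mem_univ (0:ℝ)) (Set.mem_univ (1:ℝ))
    zero_lt_one hd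
  rw [slope_def_field] at hslope
  simp only [zero_smul, add_zero, one_smul] at hslope hd
  have h1 : x + (z - x) = z := by abel
  rw [h1] at hslope
  have : ⟪g x, z - x⟫ ≤ f z - f x := by
    have := hslope
    field_simp at this
    linarith
  linarith

/-- descent lemma -/
lemma auxB (hg : ∀ y, HasGradientAt f (g y) y)
    (hL : ∀ a b, ‖g a - g b‖ ≤ L * ‖a - b‖) (y z : E) :
    f z ≤ f y + ⟪g y, z - y⟫ + L / 2 * ‖z - y‖ ^ 2 := by
  set v := z - y with hv
  set ψ : ℝ → ℝ := fun t => f (y + t • v) - t * ⟪g y, v⟫ - L / 2 * t ^ 2 * ‖v‖ ^ 2 with hψ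
  have hψd : ∀ t : ℝ, HasDerivAt ψ
      (⟪g (y + t • v), v⟫ - ⟪g y, v⟫ - L * t * ‖v‖ ^ 2) t := by
    intro t
    have h1 := auxDeriv hg y v t
    have h2 : HasDerivAt (fun t : ℝ => t * ⟪g y, v⟫) ⟪g y, v⟫ t := by
      simpa using (hasDerivAt_id t).mul_const ⟪g y, v⟫
    have h3 : HasDerivAt (fun t : ℝ => L / 2 * t ^ 2 * ‖v‖ ^ 2) (L * t * ‖v‖ ^ 2) t := by
      have : HasDerivAt (fun t : ℝ => t ^ 2) (2 * t) t := by
        simpa using hasDerivAt_pow 2 t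
      have := (this.const_mul (L / 2)).mul_const (‖v‖ ^ 2)
      have e : L / 2 * (2 * t) * ‖v‖ ^ 2 = L * t * ‖v‖ ^ 2 := by ring
      rw [e] at this
      exact this
    exact (h1.sub h2).sub h3
  have hanti : AntitoneOn ψ (Set.Icc (0:ℝ) 1) := by
    apply antitoneOn_of_deriv_nonpos (convex_Icc 0 1)
    · exact fun t _ => ((hψd t).continuousAt).continuousWithinAt
    · exact fun t _ => ((hψd t).differentiableAt).differentiableWithinAt
    · intro t ht
      rw [interior_Icc] at ht
      rw [(hψd t).deriv]
      have hip : ⟪g (y + t • v) - g y, v⟫ ≤ L * t * ‖v‖ ^ 2 := by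
        calc ⟪g (y + t • v) - g y, v⟫ ≤ ‖g (y + t • v) - g y‖ * ‖v‖ :=
              real_inner_le_norm _ _
          _ ≤ (L * ‖(y + t • v) - y‖) * ‖v‖ := by
              apply mul_le_mul_of_nonneg_right _ (norm_nonneg _)
              exact hL _ _
          _ = L * t * ‖v‖ ^ 2 := by
              have : (y + t • v) - y = t • v := by abel
              rw [this, norm_smul, Real.norm_eq_abs, abs_of_pos ht.1]
              ring
      rw [inner_sub_left] at hip
      linarith
  have hle := hanti (Set.mem_Icc.mpr ⟨le_refl 0, zero_le_one⟩)
    (Set.mem_Icc.mpr ⟨zero_le_one, le_refl 1⟩) zero_le_one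
  have h0 : ψ 0 = f y := by simp [hψ]
  have h1 : ψ 1 = f z - ⟪g y, v⟫ - L / 2 * ‖v‖ ^ 2 := by
    have hyz : y + (1:ℝ) • v = z := by rw [one_smul, hv]; abel
    show f (y + (1:ℝ) • v) - 1 * ⟪g y, v⟫ - L / 2 * 1 ^ 2 * ‖v‖ ^ 2 = _
    rw [hyz]; ring
  rw [h0, h1] at hle
  rw [hv] at *
  linarith

/-- key co-coercivity-type lemma -/
lemma auxC (hconv : ConvexOn ℝ Set.univ f)
    (hg : ∀ y, HasGradientAt f (g y) y)
    (hL : ∀ a b, ‖g a - g b‖ ≤ L * ‖a - b‖) (hLpos : 0 < L) (y z : E) :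
    ‖g z - g y‖ ^ 2 ≤ 2 * L * (f z - f y - ⟪g y, z - y⟫) := by
  set u := g z - g y with hu
  set w := z - L⁻¹ • u with hw
  have h1 := auxB hg hL z w
  have h2 := auxA hconv hg y w
  have hwz : w - z = -(L⁻¹ • u) := by rw [hw]; abel
  have hwy : w - y = (z - y) - L⁻¹ • u := by rw [hw]; abel
  have e1 : ⟪g z, w - z⟫ = -(L⁻¹ * ⟪g z, u⟫) := by
    rw [hwz, inner_neg_right, real_inner_smul_right]
  have e2 : ‖w - z‖ ^ 2 = L⁻¹ ^ 2 * ‖u‖ ^ 2 := by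
    rw [hwz, norm_neg, norm_smul, Real.norm_eq_abs, abs_of_pos (inv_pos.mpr hLpos)]
    ring
  have e3 : ⟪g y, w - y⟫ = ⟪g y, z - y⟫ - L⁻¹ * ⟪g y, u⟫ := by
    rw [hwy, inner_sub_right, real_inner_smul_right]
  rw [e1, e2] at h1
  rw [e3] at h2
  have e4 : ⟪g z, u⟫ - ⟪g y, u⟫ = ‖u‖ ^ 2 := by
    rw [← inner_sub_left, ← hu, real_inner_self_eq_norm_sq]
  have hLne : L ≠ 0 := hLpos.ne'
  have e5 : L⁻¹ * ⟪g z, u⟫ - L⁻¹ * ⟪g y, u⟫ = L⁻¹ * ‖u‖ ^ 2 := by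
    rw [← mul_sub, e4]
  have key : L⁻¹ * ‖u‖ ^ 2 - L / 2 * (L⁻¹ ^ 2 * ‖u‖ ^ 2) ≤ f z - f y - ⟪g y, z - y⟫ := by
    linarith [h1, h2, e5]
  have hsimp : L⁻¹ * ‖u‖ ^ 2 - L / 2 * (L⁻¹ ^ 2 * ‖u‖ ^ 2) = ‖u‖ ^ 2 / (2 * L) := by
    field_simp
    ring
  rw [hsimp] at key
  rw [div_le_iff₀ (by positivity)] at key
  linarith [key]

end aux

theorem stmt6 {d n : ℕ} (hn : 0 < n)
    (f : Fin n → EuclideanSpace ℝ (Fin d) → ℝ)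
    (g : Fin n → EuclideanSpace ℝ (Fin d) → EuclideanSpace ℝ (Fin d)) (L : ℝ)
    (hconv : ∀ i, ConvexOn ℝ Set.univ (f i))
    (hg : ∀ i y, HasGradientAt (f i) (g i y) y)
    (hL : ∀ i x y, ‖g i x - g i y‖ ≤ L * ‖x - y‖)
    (xs : EuclideanSpace ℝ (Fin d))
    (hmin : ∀ y, (n : ℝ)⁻¹ * ∑ i, f i xs ≤ (n : ℝ)⁻¹ * ∑ i, f i y)
    (x : EuclideanSpace ℝ (Fin d)) :
    ∑ i, ‖g i x - g i xs‖ ^ 2 ≤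
      2 * n * L * ((n : ℝ)⁻¹ * ∑ i, f i x - (n : ℝ)⁻¹ * ∑ i, f i xs) := by
  have i0 : Fin n := ⟨0, hn⟩
  rcases lt_trichotomy L 0 with hLneg | hL0 | hLpos
  · -- L < 0 : then x = xs
    have hxeq : x = xs := by
      by_contra hne
      have hnorm : 0 < ‖x - xs‖ := by
        rw [norm_pos_iff]; exact sub_ne_zero.mpr hne
      have := hL i0 x xs
      nlinarith [norm_nonneg (g i0 x - g i0 xs)]
    subst hxeq
    simp
  · -- L = 0 : gradients equal
    subst hL0
    have hgz : ∀ i, g i x - g i xs = 0 := by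
      intro i
      have := hL i x xs
      simp only [zero_mul] at this
      exact norm_le_zero_iff.mp this
    simp [hgz]
  · -- main case L > 0
    -- gradient of average is zero at xs
    have hnne : (n : ℝ) ≠ 0 := Nat.cast_ne_zero.mpr hn.ne'
    have hsum0 : ∑ i, g i xs = 0 := by
      have hF : HasFDerivAt (fun y => (n : ℝ)⁻¹ * ∑ i, f i y)
          ((n : ℝ)⁻¹ • ∑ i, (InnerProductSpace.toDual ℝ _ (g i xs) : _ →L[ℝ] ℝ)) xs := by
        have hsum : HasFDerivAt (fun y => ∑ i, f i y)
            (∑ i, (InnerProductSpace.toDual ℝ _ (g i xs) : _ →L[ℝ] ℝ)) xs :=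
          HasFDerivAt.fun_sum (fun i _ => (hg i xs).hasFDerivAt)
        simpa [smul_eq_mul] using hsum.const_mul ((n : ℝ)⁻¹)
      have hmon : IsMinOn (fun y => (n : ℝ)⁻¹ * ∑ i, f i y) Set.univ xs :=
        isMinOn_iff.mpr (fun y _ => hmin y)
      have hloc : IsLocalMin (fun y => (n : ℝ)⁻¹ * ∑ i, f i y) xs :=
        hmon.isLocalMin Filter.univ_mem
      have hz := hloc.hasFDerivAt_eq_zero hF
      have : (InnerProductSpace.toDual ℝ _ ((n : ℝ)⁻¹ • ∑ i, g i xs) : _ →L[ℝ] ℝ) = 0 := by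
        rw [map_smul, map_sum]; exact hz
      have h2 : (n : ℝ)⁻¹ • ∑ i, g i xs = 0 :=
        (InnerProductSpace.toDual ℝ _).map_eq_zero_iff.mp this
      rcases smul_eq_zero.mp h2 with h | h
      · exact absurd h (inv_ne_zero hnne)
      · exact h
    have hkey : ∀ i, ‖g i x - g i xs‖ ^ 2 ≤
        2 * L * (f i x - f i xs - ⟪g i xs, x - xs⟫) := fun i =>
      auxC (hconv i) (hg i) (hL i) hLpos xs x
    calc ∑ i, ‖g i x - g i xs‖ ^ 2
        ≤ ∑ i, 2 * L * (f i x - f i xs - ⟪g i xs, x - xs⟫) :=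
          Finset.sum_le_sum (fun i _ => hkey i)
      _ = 2 * L * ((∑ i, f i x) - (∑ i, f i xs) - ⟪∑ i, g i xs, x - xs⟫) := by
          rw [← Finset.mul_sum, sum_inner]
          congr 1
          rw [Finset.sum_sub_distrib, Finset.sum_sub_distrib]
      _ = 2 * L * ((∑ i, f i x) - (∑ i, f i xs)) := by
          rw [hsum0]; simp
      _ = 2 * n * L * ((n : ℝ)⁻¹ * ∑ i, f i x - (n : ℝ)⁻¹ * ∑ i, f i xs) := by
          field_simp
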